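/- For the Coulomb potential in ℝ³ one has the Fefferman–de la Llave representation 1/|x−y| = (1/π) ∫₀^∞ ∫_{ℝ³} r^{−5} 𝟙_{|x−z|≤r} 𝟙_{|y−z|≤r} dz dr for all x ≠ y in ℝ³. -/

import Mathlib

open MeasureTheory Real

local notation "E3" => EuclideanSpace ℝ (Fin 3)

lemma coords_symm (v : Fin 2 → ℝ) (i : Fin 2) :
    (MeasurableEquiv.toLp 2 (Fin 2 → ℝ)) v i = v i := rfl

lemma disk_vol (s : ℝ) :
    volume {v : Fin 2 → ℝ | v 0 ^ 2 + v 1 ^ 2 ≤ s} = ENNReal.ofReal (π * s) := by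
  rcases lt_or_ge s 0 with hs | hs
  · have : {v : Fin 2 → ℝ | v 0 ^ 2 + v 1 ^ 2 ≤ s} = ∅ := by
      ext v; simp only [Set.mem_setOf_eq, Set.mem_empty_iff_false, iff_false, not_le]
      nlinarith [sq_nonneg (v 0), sq_nonneg (v 1)]
    rw [this, measure_empty, Eq.comm, ENNReal.ofReal_eq_zero]
    nlinarith [pi_pos]
  · have h1 : {v : Fin 2 → ℝ | v 0 ^ 2 + v 1 ^ 2 ≤ s} =
        (MeasurableEquiv.toLp 2 (Fin 2 → ℝ)) ⁻¹'
          (Metric.closedBall (0 : EuclideanSpace ℝ (Fin 2)) (Real.sqrt s)) := by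
      ext v
      simp only [Set.mem_preimage, Metric.mem_closedBall, Set.mem_setOf_eq,
        dist_zero_right, EuclideanSpace.norm_eq, coords_symm, Real.norm_eq_abs, sq_abs,
        Fin.sum_univ_two]
      exact (Real.sqrt_le_sqrt_iff hs).symm
    rw [h1, ← MeasurableEquiv.symm_symm (MeasurableEquiv.toLp 2 (Fin 2 → ℝ)),
      ((EuclideanSpace.volume_preserving_symm_measurableEquiv_toLp (Fin 2)).symm).measure_preimage
      measurableSet_closedBall.nullMeasurableSet,
      EuclideanSpace.volume_closedBall]
    simp only [Fintype.card_fin]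
    rw [show ((2 : ℕ) : ℝ) / 2 + 1 = 2 by norm_num, Real.Gamma_two, div_one,
      Real.sq_sqrt pi_nonneg, ← ENNReal.ofReal_pow (Real.sqrt_nonneg s),
      Real.sq_sqrt hs, ← ENNReal.ofReal_mul hs]
    rw [mul_comm]

local notation "ψ" => MeasurableEquiv.piFinSuccAbove (fun _ : Fin 3 => ℝ) 0

lemma psi_coords (t : ℝ) (v : Fin 2 → ℝ) :
    (ψ).symm (t, v) 0 = t ∧ (ψ).symm (t, v) 1 = v 0 ∧ (ψ).symm (t, v) 2 = v 1 := by
  refine ⟨?_, ?_, ?_⟩ <;>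
    simp only [MeasurableEquiv.piFinSuccAbove, MeasurableEquiv.symm_mk,
      MeasurableEquiv.coe_mk, Equiv.symm_symm, Fin.insertNthEquiv_apply]
  · simp
  · rfl
  · rfl

lemma measT (d r : ℝ) : MeasurableSet {w : Fin 3 → ℝ |
    w 0 ^ 2 + w 1 ^ 2 + w 2 ^ 2 ≤ r ^ 2 ∧ (w 0 - d) ^ 2 + w 1 ^ 2 + w 2 ^ 2 ≤ r ^ 2} := by
  apply MeasurableSet.inter
  · exact measurableSet_le
      (((((measurable_pi_apply (0 : Fin 3) : Measurable fun w : Fin 3 → ℝ => w 0)).pow_const 2).add ((measurable_pi_apply 1).pow_const 2)).add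
        ((measurable_pi_apply 2).pow_const 2)) measurable_const
  · exact measurableSet_le
      ((((((measurable_pi_apply (0 : Fin 3) : Measurable fun w : Fin 3 → ℝ => w 0)).sub_const d).pow_const 2).add
        ((measurable_pi_apply 1).pow_const 2)).add
        ((measurable_pi_apply 2).pow_const 2)) measurable_const




lemma key_interval (d r : ℝ) (hd : 0 < d) (hr : 0 < r) (h : d ≤ 2 * r) :
    ∫ t in (d - r)..r, π * (r ^ 2 - max (t ^ 2) ((t - d) ^ 2))
      = π / 12 * (16 * r ^ 3 - 12 * r ^ 2 * d + d ^ 3) := by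
  have hdr : d - r ≤ d / 2 := by linarith
  have hd2 : d / 2 ≤ r := by linarith
  have cmax : Continuous fun t : ℝ => max (t ^ 2) ((t - d) ^ 2) :=
    (continuous_pow 2).max ((continuous_id.sub continuous_const).pow 2)
  have hcont : Continuous fun t : ℝ => π * (r ^ 2 - max (t ^ 2) ((t - d) ^ 2)) :=
    continuous_const.mul (continuous_const.sub cmax)
  rw [← intervalIntegral.integral_add_adjacent_intervals (a := d - r) (b := d / 2) (c := r)
    (hcont.intervalIntegrable _ _) (hcont.intervalIntegrable _ _)]
  have e1 : ∫ t in (d - r)..(d / 2), π * (r ^ 2 - max (t ^ 2) ((t - d) ^ 2))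
      = ∫ t in (d - r)..(d / 2), π * (r ^ 2 - (t - d) ^ 2) := by
    apply intervalIntegral.integral_congr
    intro t ht
    rw [Set.uIcc_of_le hdr, Set.mem_Icc] at ht
    show π * (r ^ 2 - max (t ^ 2) ((t - d) ^ 2)) = π * (r ^ 2 - (t - d) ^ 2)
    rw [max_eq_right (by nlinarith [ht.1, ht.2] : t ^ 2 ≤ (t - d) ^ 2)]
  have e2 : ∫ t in (d / 2)..r, π * (r ^ 2 - max (t ^ 2) ((t - d) ^ 2))
      = ∫ t in (d / 2)..r, π * (r ^ 2 - t ^ 2) := by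
    apply intervalIntegral.integral_congr
    intro t ht
    rw [Set.uIcc_of_le hd2, Set.mem_Icc] at ht
    show π * (r ^ 2 - max (t ^ 2) ((t - d) ^ 2)) = π * (r ^ 2 - t ^ 2)
    rw [max_eq_left (by nlinarith [ht.1, ht.2] : (t - d) ^ 2 ≤ t ^ 2)]
  have i1 : ∫ t in (d - r)..(d / 2), π * (r ^ 2 - (t - d) ^ 2)
      = (π * (r ^ 2 * (d / 2) - (d / 2 - d) ^ 3 / 3)) -
        (π * (r ^ 2 * (d - r) - (d - r - d) ^ 3 / 3)) := by
    apply intervalIntegral.integral_eq_sub_of_hasDerivAt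
      (f := fun t => π * (r ^ 2 * t - (t - d) ^ 3 / 3))
    · intro t _
      have h1 : HasDerivAt (fun t : ℝ => t - d) 1 t := (hasDerivAt_id t).sub_const d
      have h2 := h1.pow 3
      have h3 : HasDerivAt (fun t : ℝ => r ^ 2 * t) (r ^ 2) t := by
        simpa using (hasDerivAt_id t).const_mul (r ^ 2)
      have h4 := (h3.sub (h2.div_const 3)).const_mul π
      refine h4.congr_deriv ?_
      push_cast; ring
    · exact (continuous_const.mul (continuous_const.sub
        ((continuous_id.sub continuous_const).pow 2))).intervalIntegrable _ _
  have i2 : ∫ t in (d / 2)..r, π * (r ^ 2 - t ^ 2)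
      = (π * (r ^ 2 * r - r ^ 3 / 3)) - (π * (r ^ 2 * (d / 2) - (d / 2) ^ 3 / 3)) := by
    apply intervalIntegral.integral_eq_sub_of_hasDerivAt
      (f := fun t => π * (r ^ 2 * t - t ^ 3 / 3))
    · intro t _
      have h2 : HasDerivAt (fun t : ℝ => t ^ 3) (3 * t ^ 2) t := by
        simpa using hasDerivAt_pow 3 t
      have h3 : HasDerivAt (fun t : ℝ => r ^ 2 * t) (r ^ 2) t := by
        simpa using (hasDerivAt_id t).const_mul (r ^ 2)
      have h4 := (h3.sub (h2.div_const 3)).const_mul π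
      refine h4.congr_deriv ?_
      ring
    · exact (continuous_const.mul (continuous_const.sub
        (continuous_pow 2))).intervalIntegrable _ _
  rw [e1, e2, i1, i2]
  ring

lemma pi3_vol (d r : ℝ) (hd : 0 < d) (hr : 0 < r) :
    volume {w : Fin 3 → ℝ |
      w 0 ^ 2 + w 1 ^ 2 + w 2 ^ 2 ≤ r ^ 2 ∧ (w 0 - d) ^ 2 + w 1 ^ 2 + w 2 ^ 2 ≤ r ^ 2}
    = ENNReal.ofReal (if d ≤ 2 * r then π / 12 * (16 * r ^ 3 - 12 * r ^ 2 * d + d ^ 3) else 0) := by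
  set T : Set (Fin 3 → ℝ) := {w : Fin 3 → ℝ |
      w 0 ^ 2 + w 1 ^ 2 + w 2 ^ 2 ≤ r ^ 2 ∧ (w 0 - d) ^ 2 + w 1 ^ 2 + w 2 ^ 2 ≤ r ^ 2} with hT
  have hmeas : MeasurableSet T := measT d r
  have h1 : volume T = (volume.prod (volume : Measure (Fin 2 → ℝ))) ((ψ).symm ⁻¹' T) :=
    (((measurePreserving_piFinSuccAbove (fun _ : Fin 3 => (volume : Measure ℝ)) 0).symm
      (ψ)).measure_preimage hmeas.nullMeasurableSet).symm
  rw [h1, Measure.prod_apply (((ψ).symm.measurable) hmeas)]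
  have hsec : ∀ t : ℝ, (Prod.mk t ⁻¹' ((ψ).symm ⁻¹' T)) =
      {v : Fin 2 → ℝ | v 0 ^ 2 + v 1 ^ 2 ≤ r ^ 2 - max (t ^ 2) ((t - d) ^ 2)} := by
    intro t
    ext v
    obtain ⟨e0, e1, e2⟩ := psi_coords t v
    simp only [Set.mem_preimage, hT, Set.mem_setOf_eq, e0, e1, e2]
    rcases le_total (t ^ 2) ((t - d) ^ 2) with h | h
    · rw [max_eq_right h]; constructor <;> intro hh <;> [skip; constructor] <;>
        first
        | (constructor <;> linarith [hh.1, hh.2])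
        | linarith [hh.1, hh.2]
        | linarith
    · rw [max_eq_left h]; constructor <;> intro hh <;> [skip; constructor] <;>
        first
        | (constructor <;> linarith [hh.1, hh.2])
        | linarith [hh.1, hh.2]
        | linarith
  simp_rw [hsec, disk_vol]
  set g : ℝ → ℝ := fun t => π * (r ^ 2 - max (t ^ 2) ((t - d) ^ 2)) with hg
  by_cases hcase : d ≤ 2 * r
  · rw [if_pos hcase]
    have hnn : ∀ t ∈ Set.Icc (d - r) r, 0 ≤ g t := by
      intro t ht
      rw [Set.mem_Icc] at ht
      have h1 : t ^ 2 ≤ r ^ 2 := by nlinarith [ht.1, ht.2]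
      have h2 : (t - d) ^ 2 ≤ r ^ 2 := by nlinarith [ht.1, ht.2]
      have hm : max (t ^ 2) ((t - d) ^ 2) ≤ r ^ 2 := max_le h1 h2
      show (0:ℝ) ≤ π * (r ^ 2 - max (t ^ 2) ((t - d) ^ 2))
      exact mul_nonneg pi_pos.le (by linarith)
    have hind : ∀ t : ℝ, ENNReal.ofReal (g t)
        = ENNReal.ofReal ((Set.Icc (d - r) r).indicator g t) := by
      intro t
      by_cases ht : t ∈ Set.Icc (d - r) r
      · rw [Set.indicator_of_mem ht]
      · rw [Set.indicator_of_notMem ht]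
        rw [Set.mem_Icc, not_and_or, not_le, not_le] at ht
        have hgle : g t ≤ 0 := by
          show π * (r ^ 2 - max (t ^ 2) ((t - d) ^ 2)) ≤ 0
          have hm : r ^ 2 ≤ max (t ^ 2) ((t - d) ^ 2) := by
            rcases ht with ht | ht
            · exact le_max_of_le_right (by nlinarith)
            · exact le_max_of_le_left (by nlinarith)
          exact mul_nonpos_of_nonneg_of_nonpos pi_pos.le (by linarith)
        rw [ENNReal.ofReal_eq_zero.mpr hgle, ENNReal.ofReal_zero]
    change ∫⁻ x, ENNReal.ofReal (g x) = _
    simp_rw [hind]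
    have hcontg : Continuous g :=
      continuous_const.mul (continuous_const.sub
        ((continuous_pow 2).max ((continuous_id.sub continuous_const).pow 2)))
    have hint : Integrable ((Set.Icc (d - r) r).indicator g) :=
      (hcontg.integrableOn_Icc).integrable_indicator measurableSet_Icc
    rw [← ofReal_integral_eq_lintegral_ofReal hint
      (Filter.Eventually.of_forall (Set.indicator_nonneg hnn))]
    congr 1
    rw [MeasureTheory.integral_indicator measurableSet_Icc,
      MeasureTheory.integral_Icc_eq_integral_Ioc,
      ← intervalIntegral.integral_of_le (by linarith : d - r ≤ r)]
    exact key_interval d r hd hr hcase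
  · rw [if_neg hcase, ENNReal.ofReal_zero]
    have : ∀ t : ℝ, ENNReal.ofReal (g t) = 0 := by
      intro t
      rw [ENNReal.ofReal_eq_zero]
      have hmax : (d / 2) ^ 2 ≤ max (t ^ 2) ((t - d) ^ 2) := by
        rcases le_total t (d / 2) with ht | ht
        · exact le_max_of_le_right (by nlinarith)
        · exact le_max_of_le_left (by nlinarith)
      show π * (r ^ 2 - max (t ^ 2) ((t - d) ^ 2)) ≤ 0
      have h2 : r ^ 2 < (d / 2) ^ 2 := by nlinarith
      exact mul_nonpos_of_nonneg_of_nonpos pi_pos.le (by linarith [le_trans h2.le hmax])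
    change ∫⁻ x, ENNReal.ofReal (g x) = _
    simp_rw [this, lintegral_zero]




lemma ball_inter_vol (x y : E3) (r : ℝ) (hr : 0 < r) (hxy : x ≠ y) :
    volume (Metric.closedBall x r ∩ Metric.closedBall y r)
      = ENNReal.ofReal (if ‖x - y‖ ≤ 2 * r then
          π / 12 * (16 * r ^ 3 - 12 * r ^ 2 * ‖x - y‖ + ‖x - y‖ ^ 3) else 0) := by
  set d := ‖x - y‖ with hd'
  have hd : 0 < d := by rw [hd']; exact norm_sub_pos_iff.mpr hxy
  have hmeas1 : MeasurableSet (Metric.closedBall x r ∩ Metric.closedBall y r) :=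
    measurableSet_closedBall.inter measurableSet_closedBall
  -- translation
  have htrans := measurePreserving_add_right (volume : Measure E3) x
  have hpre1 : (fun z : E3 => z + x) ⁻¹' (Metric.closedBall x r ∩ Metric.closedBall y r)
      = Metric.closedBall 0 r ∩ Metric.closedBall (y - x) r := by
    ext z
    simp only [Set.mem_preimage, Set.mem_inter_iff, Metric.mem_closedBall, dist_eq_norm]
    constructor <;> intro h <;> constructor
    · simpa using h.1
    · have := h.2; rw [show z + x - y = z - (y - x) by abel] at this; exact this
    · simpa using h.1
    · have := h.2; rw [show z + x - y = z - (y - x) by abel]; exact this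
  have e1 : volume (Metric.closedBall x r ∩ Metric.closedBall y r)
      = volume (Metric.closedBall (0 : E3) r ∩ Metric.closedBall (y - x) r) := by
    rw [← htrans.measure_preimage hmeas1.nullMeasurableSet, hpre1]
  -- rotation
  set e0 : E3 := EuclideanSpace.single (0 : Fin 3) (1 : ℝ) with he0
  set v : E3 := d • e0 with hv
  have hnv : ‖v‖ = ‖y - x‖ := by
    rw [hv, norm_smul, he0, EuclideanSpace.norm_single, norm_one, mul_one, Real.norm_eq_abs,
      abs_of_pos hd, hd']
    exact norm_sub_rev x y
  set f := Submodule.reflection (ℝ ∙ (v - (y - x)))ᗮ with hf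
  have hfv : f v = y - x := Submodule.reflection_sub hnv
  have e2 : volume (Metric.closedBall (0 : E3) r ∩ Metric.closedBall (y - x) r)
      = volume (Metric.closedBall (0 : E3) r ∩ Metric.closedBall v r) := by
    rw [← (f.measurePreserving).measure_preimage
      (measurableSet_closedBall.inter measurableSet_closedBall).nullMeasurableSet]
    congr 1
    ext z
    simp only [Set.mem_preimage, Set.mem_inter_iff, Metric.mem_closedBall]
    have d1 : dist (f z) 0 = dist z 0 := by
      have := f.dist_map z 0; rwa [map_zero] at this
    have d2 : dist (f z) (y - x) = dist z v := by
      have := f.dist_map z v; rwa [hfv] at this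
    rw [d1, d2]
  -- transfer to pi space
  have e3 : volume (Metric.closedBall (0 : E3) r ∩ Metric.closedBall v r)
      = volume {w : Fin 3 → ℝ |
          w 0 ^ 2 + w 1 ^ 2 + w 2 ^ 2 ≤ r ^ 2 ∧ (w 0 - d) ^ 2 + w 1 ^ 2 + w 2 ^ 2 ≤ r ^ 2} := by
    rw [← ((EuclideanSpace.volume_preserving_symm_measurableEquiv_toLp (Fin 3)).symm).measure_preimage
      (measurableSet_closedBall.inter measurableSet_closedBall).nullMeasurableSet]
    congr 1
    ext w
    have key : ∀ u : E3, (‖u‖ ≤ r ↔ u 0 ^ 2 + u 1 ^ 2 + u 2 ^ 2 ≤ r ^ 2) := by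
      intro u
      rw [EuclideanSpace.norm_eq, Real.sqrt_le_iff]
      simp only [Fin.sum_univ_three, Real.norm_eq_abs, sq_abs]
      constructor
      · exact fun h => h.2
      · exact fun h => ⟨hr.le, h⟩
    have hv0 : v 0 = d := by
      rw [hv, he0, PiLp.smul_apply, EuclideanSpace.single_apply]
      simp
    have hv1 : v 1 = 0 := by
      rw [hv, he0, PiLp.smul_apply, EuclideanSpace.single_apply,
        if_neg (by decide : (1 : Fin 3) ≠ 0)]
      simp
    have hv2 : v 2 = 0 := by
      rw [hv, he0, PiLp.smul_apply, EuclideanSpace.single_apply,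
        if_neg (by decide : (2 : Fin 3) ≠ 0)]
      simp
    set u : E3 := (MeasurableEquiv.toLp 2 (Fin 3 → ℝ)) w with hu
    have hcoord : ∀ i : Fin 3, u i = w i := fun _ => rfl
    have hsub : ∀ j : Fin 3, (u - v) j = u j - v j := fun _ => rfl
    simp only [Set.mem_preimage, Set.mem_inter_iff, Metric.mem_closedBall, Set.mem_setOf_eq,
      dist_zero_right, dist_eq_norm, sub_zero, MeasurableEquiv.symm_symm, ← hu]
    rw [key u, key (u - v)]
    simp only [hsub, hcoord, hv0, hv1, hv2, sub_zero]
  rw [e1, e2, e3, pi3_vol d r hd hr]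

lemma outer_int (d : ℝ) (hd : 0 < d) :
    ∫ r in Set.Ioi (0 : ℝ),
      (if d ≤ 2 * r then 1 / r ^ 5 * (π / 12 * (16 * r ^ 3 - 12 * r ^ 2 * d + d ^ 3)) else 0)
    = π / d := by
  have hc : 0 < d / 2 := by linarith
  set G : ℝ → ℝ := fun r =>
    π / 12 * (16 * r ^ (-2 : ℝ) - 12 * d * r ^ (-3 : ℝ) + d ^ 3 * r ^ (-5 : ℝ)) with hG
  have hrpow : ∀ (r : ℝ), 0 < r → ∀ n : ℕ, r ^ (-(n : ℝ)) = 1 / r ^ n := by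
    intro r hr n
    rw [Real.rpow_neg hr.le, Real.rpow_natCast, one_div]
  have step1 : ∀ r ∈ Set.Ioi (0 : ℝ),
      (if d ≤ 2 * r then 1 / r ^ 5 * (π / 12 * (16 * r ^ 3 - 12 * r ^ 2 * d + d ^ 3)) else 0)
      = (Set.Ioi (d / 2)).indicator G r := by
    intro r hr
    rw [Set.mem_Ioi] at hr
    by_cases hdr : r ∈ Set.Ioi (d / 2)
    · rw [Set.indicator_of_mem hdr]
      rw [Set.mem_Ioi] at hdr
      rw [if_pos (by linarith)]
      simp only [hG]
      have e2 : r ^ (-2 : ℝ) = 1 / r ^ 2 := by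
        rw [show (-2 : ℝ) = -((2 : ℕ) : ℝ) by norm_num]; exact hrpow r hr 2
      have e3 : r ^ (-3 : ℝ) = 1 / r ^ 3 := by
        rw [show (-3 : ℝ) = -((3 : ℕ) : ℝ) by norm_num]; exact hrpow r hr 3
      have e5 : r ^ (-5 : ℝ) = 1 / r ^ 5 := by
        rw [show (-5 : ℝ) = -((5 : ℕ) : ℝ) by norm_num]; exact hrpow r hr 5
      rw [e2, e3, e5]
      field_simp
    · rw [Set.indicator_of_notMem hdr]
      rw [Set.mem_Ioi, not_lt] at hdr
      rcases eq_or_lt_of_le hdr with heq | hlt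
      · rw [if_pos (by linarith)]
        rw [heq]
        have : 16 * (d / 2) ^ 3 - 12 * (d / 2) ^ 2 * d + d ^ 3 = 0 := by ring
        rw [this, mul_zero, mul_zero]
      · rw [if_neg (by intro h; linarith)]
  rw [setIntegral_congr_fun measurableSet_Ioi step1,
    setIntegral_indicator measurableSet_Ioi,
    show Set.Ioi (0 : ℝ) ∩ Set.Ioi (d / 2) = Set.Ioi (d / 2) by
      rw [Set.Ioi_inter_Ioi, max_eq_right hc.le]]
  have I2 : IntegrableOn (fun r : ℝ => 16 * r ^ (-2 : ℝ)) (Set.Ioi (d / 2)) :=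
    (integrableOn_Ioi_rpow_of_lt (by norm_num) hc).const_mul 16
  have I3 : IntegrableOn (fun r : ℝ => 12 * d * r ^ (-3 : ℝ)) (Set.Ioi (d / 2)) :=
    (integrableOn_Ioi_rpow_of_lt (by norm_num) hc).const_mul (12 * d)
  have I5 : IntegrableOn (fun r : ℝ => d ^ 3 * r ^ (-5 : ℝ)) (Set.Ioi (d / 2)) :=
    (integrableOn_Ioi_rpow_of_lt (by norm_num) hc).const_mul (d ^ 3)
  rw [hG]
  simp only []
  rw [MeasureTheory.integral_const_mul]
  have Isub : IntegrableOn (fun r : ℝ => 16 * r ^ (-2 : ℝ) - 12 * d * r ^ (-3 : ℝ))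
      (Set.Ioi (d / 2)) := I2.sub I3
  rw [integral_add Isub I5, integral_sub I2 I3]
  rw [MeasureTheory.integral_const_mul, MeasureTheory.integral_const_mul, MeasureTheory.integral_const_mul]
  rw [integral_Ioi_rpow_of_lt (by norm_num : (-2:ℝ) < -1) hc,
    integral_Ioi_rpow_of_lt (by norm_num : (-3:ℝ) < -1) hc,
    integral_Ioi_rpow_of_lt (by norm_num : (-5:ℝ) < -1) hc]
  rw [show (-2 : ℝ) + 1 = -1 by norm_num, show (-3 : ℝ) + 1 = -2 by norm_num,
    show (-5 : ℝ) + 1 = -4 by norm_num]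
  rw [show ((d/2 : ℝ) ^ (-1 : ℝ)) = (d/2)⁻¹ from Real.rpow_neg_one _,
    show ((d/2 : ℝ) ^ (-2 : ℝ)) = 1 / (d/2) ^ 2 by
      rw [show (-2 : ℝ) = -((2 : ℕ) : ℝ) by norm_num]; exact hrpow _ hc 2,
    show ((d/2 : ℝ) ^ (-4 : ℝ)) = 1 / (d/2) ^ 4 by
      rw [show (-4 : ℝ) = -((4 : ℕ) : ℝ) by norm_num]; exact hrpow _ hc 4]
  field_simp
  ring






lemma inner_int (x y : E3) (r : ℝ) :
    ∫ z : E3, (1 / r ^ 5) * (if ‖x - z‖ ≤ r then (1 : ℝ) else 0) *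
        (if ‖y - z‖ ≤ r then (1 : ℝ) else 0)
      = (1 / r ^ 5) * (volume (Metric.closedBall x r ∩ Metric.closedBall y r)).toReal := by
  have hfun : (fun z : E3 => (1 / r ^ 5) * (if ‖x - z‖ ≤ r then (1 : ℝ) else 0) *
      (if ‖y - z‖ ≤ r then (1 : ℝ) else 0))
      = fun z : E3 => (1 / r ^ 5) *
        (Metric.closedBall x r ∩ Metric.closedBall y r).indicator 1 z := by
    funext z
    have m1 : z ∈ Metric.closedBall x r ↔ ‖x - z‖ ≤ r := by
      rw [Metric.mem_closedBall, dist_eq_norm, norm_sub_rev]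
    have m2 : z ∈ Metric.closedBall y r ↔ ‖y - z‖ ≤ r := by
      rw [Metric.mem_closedBall, dist_eq_norm, norm_sub_rev]
    classical
    rw [Set.indicator_apply]
    by_cases h1 : ‖x - z‖ ≤ r <;> by_cases h2 : ‖y - z‖ ≤ r <;>
      simp [h1, h2, Set.mem_inter_iff, m1, m2]
  rw [hfun, MeasureTheory.integral_const_mul,
    MeasureTheory.integral_indicator_one
      (measurableSet_closedBall.inter measurableSet_closedBall), measureReal_def]

/-- Fefferman–de la Llave representation of the Coulomb potential in ℝ³. -/
theorem fefferman_de_la_llave_coulomb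
    (x y : EuclideanSpace ℝ (Fin 3)) (hxy : x ≠ y) :
    1 / ‖x - y‖ =
      (1 / π) * ∫ r in Set.Ioi (0 : ℝ), ∫ z : EuclideanSpace ℝ (Fin 3),
        (1 / r ^ 5) * (if ‖x - z‖ ≤ r then (1 : ℝ) else 0) *
          (if ‖y - z‖ ≤ r then (1 : ℝ) else 0) := by
  have hd : 0 < ‖x - y‖ := norm_sub_pos_iff.mpr hxy
  have key : ∀ r ∈ Set.Ioi (0 : ℝ),
      (∫ z : E3, (1 / r ^ 5) * (if ‖x - z‖ ≤ r then (1 : ℝ) else 0) *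
        (if ‖y - z‖ ≤ r then (1 : ℝ) else 0))
      = (if ‖x - y‖ ≤ 2 * r then
          1 / r ^ 5 * (π / 12 * (16 * r ^ 3 - 12 * r ^ 2 * ‖x - y‖ + ‖x - y‖ ^ 3)) else 0) := by
    intro r hr
    rw [Set.mem_Ioi] at hr
    rw [inner_int x y r, ball_inter_vol x y r hr hxy, ENNReal.toReal_ofReal]
    · rw [mul_ite, mul_zero]
    · split_ifs with h
      · have h4 : 0 ≤ 4 * r + ‖x - y‖ := by linarith
        have : 16 * r ^ 3 - 12 * r ^ 2 * ‖x - y‖ + ‖x - y‖ ^ 3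
            = (2 * r - ‖x - y‖) ^ 2 * (4 * r + ‖x - y‖) := by ring
        rw [this]
        have h5 : 0 ≤ (2 * r - ‖x - y‖) ^ 2 * (4 * r + ‖x - y‖) :=
          mul_nonneg (sq_nonneg _) h4
        have h6 : 0 ≤ π / 12 := by positivity
        exact mul_nonneg h6 h5
      · exact le_refl 0
  rw [setIntegral_congr_fun measurableSet_Ioi key, outer_int ‖x - y‖ hd]
  rw [one_div, one_div, eq_comm, inv_mul_eq_iff_eq_mul₀ (by positivity : π ≠ 0)]
  field_simp
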